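/- Let g, h : [0,1] → ℝ be bounded measurable functions with ∫₀¹ g(u) du = ∫₀¹ h(u) du = 0. Then R(g) and R(h) are square integrable on [0,1] and the operator R is an isometry with respect to the L²([0,1]) inner product: ∫₀¹ R(g)(x) R(h)(x) dx = ∫₀¹ g(x) h(x) dx; in particular ∫₀¹ R(g)(x)² dx = ∫₀¹ g(x)² dx. -/

import Mathlib

open MeasureTheory Filter Set intervalIntegral

/-- The hazard rate derivative operator
`R(g)(x) = g(x) − (1/(1−x)) ∫ₓ¹ g(u) du`. -/
noncomputable def hazardR (g : ℝ → ℝ) (x : ℝ) : ℝ :=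
  g x - (1 / (1 - x)) * ∫ u in x..1, g u

namespace HazardAux

/-- The primitive `x ↦ ∫ₓ¹ f`. -/
noncomputable def prim (f : ℝ → ℝ) (x : ℝ) : ℝ := ∫ u in x..1, f u

lemma hazardR_eq (g : ℝ → ℝ) (x : ℝ) :
    hazardR g x = g x - (1 / (1 - x)) * prim g x := rfl

lemma prim_cont {f : ℝ → ℝ} (hfi : Integrable f) : Continuous (prim f) := by
  have : prim f = fun x => -∫ u in (1:ℝ)..x, f u := by
    funext x; rw [prim, intervalIntegral.integral_symm]
  rw [this]
  exact (hfi.continuous_primitive 1).neg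

lemma prim_Icc (f : ℝ → ℝ) {x : ℝ} (hx : x ≤ 1) :
    prim f x = ∫ u in Icc x 1, f u := by
  rw [prim, intervalIntegral.integral_of_le hx, integral_Icc_eq_integral_Ioc]

lemma prim_bound {f : ℝ → ℝ} {C : ℝ} (hfb : ∀ y ∈ Icc (0:ℝ) 1, |f y| ≤ C) {x : ℝ}
    (hx : x ∈ Icc (0:ℝ) 1) : |prim f x| ≤ C * (1 - x) := by
  have := intervalIntegral.norm_integral_le_of_norm_le_const (C := C) (f := f)
    (a := x) (b := 1) (fun y hy => by
      rw [Set.uIoc_of_le hx.2] at hy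
      exact hfb y ⟨le_trans hx.1 hy.1.le, hy.2⟩)
  simpa [prim, abs_of_nonneg (sub_nonneg.2 hx.2)] using this

lemma prim_ratio {f : ℝ → ℝ} {C : ℝ} (hC : 0 ≤ C) (hfb : ∀ y ∈ Icc (0:ℝ) 1, |f y| ≤ C)
    {x : ℝ} (hx : x ∈ Icc (0:ℝ) 1) : |1 / (1 - x) * prim f x| ≤ C := by
  rcases eq_or_lt_of_le hx.2 with h1 | h1
  · have : prim f x = 0 := by rw [prim, h1, intervalIntegral.integral_same]
    simp [this, hC]
  · have hne : (1:ℝ) - x ≠ 0 := by linarith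
    have hpos : 0 < 1 - x := by linarith
    rw [abs_mul, abs_of_nonneg (by positivity : (0:ℝ) ≤ 1 / (1 - x))]
    calc 1 / (1 - x) * |prim f x| ≤ 1 / (1 - x) * (C * (1 - x)) :=
          mul_le_mul_of_nonneg_left (prim_bound hfb hx) (by positivity)
      _ = C := by field_simp

lemma abs_one_div_mul {x : ℝ} (hx : x ∈ Icc (0:ℝ) 1) : |1 / (1 - x)| * (1 - x) ≤ 1 := by
  rcases eq_or_lt_of_le hx.2 with h1 | h1
  · rw [h1]; norm_num
  · have hpos : (0:ℝ) < 1 - x := by linarith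
    rw [abs_of_nonneg (by positivity : (0:ℝ) ≤ 1 / (1 - x))]
    rw [div_mul_eq_mul_div, one_mul, div_self (ne_of_gt hpos)]

lemma m1x : Measurable fun x : ℝ => 1 / (1 - x) := by
  have : Measurable fun x : ℝ => (1 - x)⁻¹ := (measurable_id.const_sub 1).inv
  simpa [one_div] using this

lemma bdd_integrableOn {f : ℝ → ℝ} {s : Set ℝ}
    (hm : AEStronglyMeasurable f (volume.restrict s)) (hs : MeasurableSet s)
    (hsub : s ⊆ Icc 0 1) {D : ℝ} (hb : ∀ x ∈ s, |f x| ≤ D) :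
    IntegrableOn f s volume := by
  refine Integrable.mono' (g := fun _ => D) (integrableOn_const ?_) hm
    ((ae_restrict_iff' hs).2 (ae_of_all _ hb))
  exact (lt_of_le_of_lt (measure_mono hsub) (by simp [Real.volume_Icc])).ne

lemma inv_sq_integral {m : ℝ} (h0 : 0 ≤ m) (h1 : m < 1) :
    ∫ x in Icc (0:ℝ) m, (1 / (1 - x))^2 = 1 / (1 - m) - 1 := by
  rw [integral_Icc_eq_integral_Ioc, ← intervalIntegral.integral_of_le h0]
  have hd : ∀ x ∈ uIcc (0:ℝ) m, HasDerivAt (fun y => 1 / (1 - y)) ((1 / (1 - x))^2) x := by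
    intro x hx
    rw [Set.uIcc_of_le h0] at hx
    have hne : (1 : ℝ) - x ≠ 0 := by nlinarith [hx.1, hx.2]
    have h1' : HasDerivAt (fun y : ℝ => 1 - y) (-1) x := (hasDerivAt_id x).const_sub 1
    have := h1'.inv hne
    have heq : (fun y : ℝ => 1 / (1 - y)) = fun y => (1 - y)⁻¹ := by
      funext y; rw [one_div]
    rw [heq]
    rw [show (1 / (1 - x))^2 = - -1 / (1 - x)^2 by rw [neg_neg, div_pow, one_pow]]
    exact this
  have hint : IntervalIntegrable (fun x => (1 / (1 - x))^2) volume 0 m := by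
    apply ContinuousOn.intervalIntegrable
    apply ContinuousOn.pow
    apply ContinuousOn.div continuousOn_const (by fun_prop)
    intro x hx
    rw [Set.uIcc_of_le h0] at hx
    nlinarith [hx.1, hx.2]
  rw [intervalIntegral.integral_eq_sub_of_hasDerivAt hd hint]
  norm_num
lemma Smeas : MeasurableSet {q : ℝ × ℝ | q.1 ≤ q.2 ∧ q.2 ≤ 1} :=
  (measurableSet_le measurable_fst measurable_snd).inter
    (measurableSet_le measurable_snd measurable_const)

lemma key_integrable {Φ Ψ : ℝ → ℝ} (hΦ : Measurable Φ) (hΨ : Measurable Ψ)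
    {s : Set ℝ} (hsm : MeasurableSet s) (hs1 : s ⊆ Icc 0 1)
    {D E : ℝ} (hΨb : ∀ y ∈ Icc (0:ℝ) 1, |Ψ y| ≤ E)
    (hΦb : ∀ x ∈ s, |Φ x| * (1 - x) ≤ D) :
    Integrable
      (fun p : ℝ × ℝ => ({q : ℝ × ℝ | q.1 ≤ q.2 ∧ q.2 ≤ 1}).indicator (fun q => Φ q.1 * Ψ q.2) p)
      ((volume.restrict s).prod (volume.restrict (Icc 0 1))) := by
  have hE : 0 ≤ E := le_trans (abs_nonneg _) (hΨb 0 (by norm_num))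
  have hFm : Measurable fun p : ℝ × ℝ =>
      ({q : ℝ × ℝ | q.1 ≤ q.2 ∧ q.2 ≤ 1}).indicator (fun q => Φ q.1 * Ψ q.2) p :=
    ((hΦ.comp measurable_fst).mul (hΨ.comp measurable_snd)).indicator Smeas
  rw [integrable_prod_iff hFm.aestronglyMeasurable]
  constructor
  · refine ae_of_all _ fun x => ?_
    have hb : ∀ y ∈ Icc (0:ℝ) 1,
        ‖({q : ℝ × ℝ | q.1 ≤ q.2 ∧ q.2 ≤ 1}).indicator (fun q => Φ q.1 * Ψ q.2) (x, y)‖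
          ≤ |Φ x| * E := by
      intro y hy
      by_cases hmem : (x, y) ∈ {q : ℝ × ℝ | q.1 ≤ q.2 ∧ q.2 ≤ 1}
      · rw [Set.indicator_of_mem hmem]
        rw [Real.norm_eq_abs, abs_mul]
        exact mul_le_mul_of_nonneg_left (hΨb y hy) (abs_nonneg _)
      · rw [Set.indicator_of_notMem hmem]
        simpa using mul_nonneg (abs_nonneg (Φ x)) hE
    refine Integrable.mono' (g := fun _ => |Φ x| * E) ?_ ?_ ?_
    · exact integrableOn_const (by simp [Real.volume_Icc])
    · exact (hFm.comp (measurable_const.prodMk measurable_id)).aestronglyMeasurable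
    · exact (ae_restrict_iff' measurableSet_Icc).2 (ae_of_all _ hb)
  · have haesm : AEStronglyMeasurable
        (fun x => ∫ y, ‖({q : ℝ × ℝ | q.1 ≤ q.2 ∧ q.2 ≤ 1}).indicator
          (fun q => Φ q.1 * Ψ q.2) (x, y)‖ ∂(volume.restrict (Icc 0 1))) (volume.restrict s) :=
      hFm.aestronglyMeasurable.norm.integral_prod_right'
    refine Integrable.mono' (g := fun _ => D * E) (integrableOn_const ?_) haesm
      ((ae_restrict_iff' hsm).2 (ae_of_all _ fun x hx => ?_))
    · exact (lt_of_le_of_lt (measure_mono hs1) (by simp [Real.volume_Icc])).ne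
    · have hx01 := hs1 hx
      -- pointwise rewrite of inner integrand as an indicator in y
      have hrw : ∀ y : ℝ,
          ‖({q : ℝ × ℝ | q.1 ≤ q.2 ∧ q.2 ≤ 1}).indicator (fun q => Φ q.1 * Ψ q.2) (x, y)‖
            = (Icc x 1).indicator (fun y => |Φ x| * |Ψ y|) y := by
        intro y
        by_cases hmem : y ∈ Icc x 1
        · rw [Set.indicator_of_mem hmem,
            Set.indicator_of_mem (by exact ⟨hmem.1, hmem.2⟩ : (x,y) ∈ _),
            Real.norm_eq_abs, abs_mul]
        · rw [Set.indicator_of_notMem hmem,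
            Set.indicator_of_notMem (fun hc => hmem ⟨hc.1, hc.2⟩)]
          simp
      have h1 : ∫ y, ‖({q : ℝ × ℝ | q.1 ≤ q.2 ∧ q.2 ≤ 1}).indicator
            (fun q => Φ q.1 * Ψ q.2) (x, y)‖ ∂(volume.restrict (Icc 0 1))
          = ∫ y in Icc 0 1 ∩ Icc x 1, |Φ x| * |Ψ y| := by
        rw [show (fun y => ‖({q : ℝ × ℝ | q.1 ≤ q.2 ∧ q.2 ≤ 1}).indicator
            (fun q => Φ q.1 * Ψ q.2) (x, y)‖) = fun y => (Icc x 1).indicator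
            (fun y => |Φ x| * |Ψ y|) y from funext hrw]
        exact setIntegral_indicator measurableSet_Icc
      rw [Real.norm_eq_abs, h1]
      have hsub : Icc (0:ℝ) 1 ∩ Icc x 1 = Icc x 1 :=
        Set.inter_eq_right.2 (Set.Icc_subset_Icc_left hx01.1)
      rw [hsub]
      have hbound : ‖∫ y in Icc x 1, |Φ x| * |Ψ y|‖ ≤ (|Φ x| * E) * (1 - x) := by
        have h2 := norm_setIntegral_le_of_norm_le_const (μ := volume)
          (s := Icc x 1) (f := fun y => |Φ x| * |Ψ y|) (C := |Φ x| * E)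
          (by simp [Real.volume_Icc])
          (fun y hy => by
            rw [Real.norm_eq_abs, abs_of_nonneg (mul_nonneg (abs_nonneg _) (abs_nonneg _))]
            exact mul_le_mul_of_nonneg_left
              (hΨb y ⟨le_trans hx01.1 hy.1, hy.2⟩) (abs_nonneg _))
        calc ‖∫ y in Icc x 1, |Φ x| * |Ψ y|‖ ≤ |Φ x| * E * (volume (Icc x 1)).toReal := h2
          _ = (|Φ x| * E) * (1 - x) := by
              rw [Real.volume_Icc, ENNReal.toReal_ofReal (by linarith [hx01.2] : (0:ℝ) ≤ 1 - x)]
      rw [← Real.norm_eq_abs]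
      calc ‖∫ y in Icc x 1, |Φ x| * |Ψ y|‖ ≤ (|Φ x| * E) * (1 - x) := hbound
        _ = (|Φ x| * (1 - x)) * E := by ring
        _ ≤ D * E := mul_le_mul_of_nonneg_right (hΦb x hx) hE

lemma key_swap {Φ Ψ : ℝ → ℝ} (hΦ : Measurable Φ) (hΨ : Measurable Ψ)
    {s : Set ℝ} (hsm : MeasurableSet s) (hs1 : s ⊆ Icc 0 1)
    {D E : ℝ} (hΨb : ∀ y ∈ Icc (0:ℝ) 1, |Ψ y| ≤ E)
    (hΦb : ∀ x ∈ s, |Φ x| * (1 - x) ≤ D) :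
    (∫ x in s, Φ x * ∫ y in Icc x 1, Ψ y) = (∫ y in Icc (0:ℝ) 1, (∫ x in s ∩ Iic y, Φ x) * Ψ y) ∧
    Integrable (fun y => (∫ x in s ∩ Iic y, Φ x) * Ψ y) (volume.restrict (Icc (0:ℝ) 1)) := by
  have hint := key_integrable hΦ hΨ hsm hs1 hΨb hΦb
  set F : ℝ × ℝ → ℝ :=
    fun p => ({q : ℝ × ℝ | q.1 ≤ q.2 ∧ q.2 ≤ 1}).indicator (fun q => Φ q.1 * Ψ q.2) p with hF
  have inner_y : ∀ x ∈ s, (∫ y in Icc (0:ℝ) 1, F (x, y)) = Φ x * ∫ y in Icc x 1, Ψ y := by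
    intro x hx
    have hfe : (fun y => F (x, y)) = fun y => (Icc x 1).indicator (fun y => Φ x * Ψ y) y := by
      funext y
      by_cases hmem : y ∈ Icc x 1
      · rw [Set.indicator_of_mem hmem]
        exact Set.indicator_of_mem
          (show (x, y) ∈ {q : ℝ × ℝ | q.1 ≤ q.2 ∧ q.2 ≤ 1} from ⟨hmem.1, hmem.2⟩) (fun q => Φ q.1 * Ψ q.2)
      · rw [Set.indicator_of_notMem hmem]
        exact (Set.indicator_of_notMem (α := ℝ × ℝ) (M := ℝ)
          (show (x, y) ∉ {q : ℝ × ℝ | q.1 ≤ q.2 ∧ q.2 ≤ 1} from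
            fun hc => hmem ⟨hc.1, hc.2⟩) (fun q => Φ q.1 * Ψ q.2))
    rw [hfe, setIntegral_indicator measurableSet_Icc,
      Set.inter_eq_right.2 (Set.Icc_subset_Icc_left (hs1 hx).1),
      MeasureTheory.integral_const_mul]
  have inner_x : ∀ y ∈ Icc (0:ℝ) 1, (∫ x in s, F (x, y)) = (∫ x in s ∩ Iic y, Φ x) * Ψ y := by
    intro y hy
    have hfe : (fun x => F (x, y)) = fun x => (Iic y).indicator (fun x => Φ x * Ψ y) x := by
      funext x
      by_cases hmem : x ∈ Iic y
      · rw [Set.indicator_of_mem hmem]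
        exact Set.indicator_of_mem
          (show (x, y) ∈ {q : ℝ × ℝ | q.1 ≤ q.2 ∧ q.2 ≤ 1} from ⟨hmem, hy.2⟩) (fun q => Φ q.1 * Ψ q.2)
      · rw [Set.indicator_of_notMem hmem]
        exact (Set.indicator_of_notMem (α := ℝ × ℝ) (M := ℝ)
          (show (x, y) ∉ {q : ℝ × ℝ | q.1 ≤ q.2 ∧ q.2 ≤ 1} from fun hc => hmem hc.1) (fun q => Φ q.1 * Ψ q.2))
    rw [hfe, setIntegral_indicator measurableSet_Iic, MeasureTheory.integral_mul_const]
  constructor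
  · have swap := integral_integral_swap (f := fun x y => F (x, y))
      (μ := volume.restrict s) (ν := volume.restrict (Icc (0:ℝ) 1)) (by exact hint)
    calc (∫ x in s, Φ x * ∫ y in Icc x 1, Ψ y)
        = ∫ x in s, ∫ y in Icc (0:ℝ) 1, F (x, y) :=
          (setIntegral_congr_fun hsm fun x hx => (inner_y x hx).symm)
      _ = ∫ y in Icc (0:ℝ) 1, ∫ x in s, F (x, y) := swap
      _ = ∫ y in Icc (0:ℝ) 1, (∫ x in s ∩ Iic y, Φ x) * Ψ y :=
          setIntegral_congr_fun measurableSet_Icc fun y hy => inner_x y hy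
  · exact hint.integral_prod_right.congr
      (Filter.eventually_of_mem (self_mem_ae_restrict measurableSet_Icc) inner_x)

theorem master (g h : ℝ → ℝ) (hgm : Measurable g) (hhm : Measurable h)
    (C : ℝ) (hC : 0 ≤ C) (hgb : ∀ y, |g y| ≤ C) (hhb : ∀ y, |h y| ≤ C)
    (hgi : Integrable g) (hhi : Integrable h)
    (hg0 : ∫ y in Icc (0:ℝ) 1, g y = 0) (hh0 : ∫ y in Icc (0:ℝ) 1, h y = 0) :
    ∫ x in Icc (0:ℝ) 1, hazardR g x * hazardR h x = ∫ x in Icc (0:ℝ) 1, g x * h x := by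
  have hgbI : ∀ y ∈ Icc (0:ℝ) 1, |g y| ≤ C := fun y _ => hgb y
  have hhbI : ∀ y ∈ Icc (0:ℝ) 1, |h y| ≤ C := fun y _ => hhb y
  have hGm : Measurable (prim g) := (prim_cont hgi).measurable
  have hHm : Measurable (prim h) := (prim_cont hhi).measurable
  have hpt : ∀ x : ℝ, hazardR g x * hazardR h x
      = g x * h x - g x * (1 / (1 - x) * prim h x) - h x * (1 / (1 - x) * prim g x)
        + (1 / (1 - x))^2 * (prim g x * prim h x) := by
    intro x; rw [hazardR_eq, hazardR_eq]; ring
  have i_gh : IntegrableOn (fun x => g x * h x) (Icc 0 1) volume := by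
    refine bdd_integrableOn (hgm.mul hhm).aestronglyMeasurable measurableSet_Icc
      (subset_refl _) (D := C * C) fun x hx => ?_
    rw [abs_mul]; exact mul_le_mul (hgb x) (hhb x) (abs_nonneg _) hC
  have i_b1 : IntegrableOn (fun x => g x * (1 / (1 - x) * prim h x)) (Icc 0 1) volume := by
    refine bdd_integrableOn (hgm.mul (m1x.mul hHm)).aestronglyMeasurable measurableSet_Icc
      (subset_refl _) (D := C * C) fun x hx => ?_
    rw [abs_mul]; exact mul_le_mul (hgb x) (prim_ratio hC hhbI hx) (abs_nonneg _) hC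
  have i_b2 : IntegrableOn (fun x => h x * (1 / (1 - x) * prim g x)) (Icc 0 1) volume := by
    refine bdd_integrableOn (hhm.mul (m1x.mul hGm)).aestronglyMeasurable measurableSet_Icc
      (subset_refl _) (D := C * C) fun x hx => ?_
    rw [abs_mul]; exact mul_le_mul (hhb x) (prim_ratio hC hgbI hx) (abs_nonneg _) hC
  have i_b3 : IntegrableOn
      (fun x => (1 / (1 - x))^2 * (prim g x * prim h x)) (Icc 0 1) volume := by
    refine bdd_integrableOn ((m1x.pow_const 2).mul (hGm.mul hHm)).aestronglyMeasurable
      measurableSet_Icc (subset_refl _) (D := C * C) fun x hx => ?_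
    have e : (1 / (1 - x))^2 * (prim g x * prim h x)
        = (1 / (1 - x) * prim g x) * (1 / (1 - x) * prim h x) := by ring
    rw [e, abs_mul]
    exact mul_le_mul (prim_ratio hC hgbI hx) (prim_ratio hC hhbI hx) (abs_nonneg _) hC
  have hIic : ∀ y ∈ Icc (0:ℝ) 1, Icc (0:ℝ) 1 ∩ Iic y = Icc 0 y := by
    intro y hy; ext z
    simp only [Set.mem_inter_iff, Set.mem_Icc, Set.mem_Iic]
    exact ⟨fun hz => ⟨hz.1.1, hz.2⟩, fun hz => ⟨⟨hz.1, hz.2.trans hy.2⟩, hz.2⟩⟩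
  -- Claim B : the integral of b2
  have hPhi2b : ∀ x ∈ Icc (0:ℝ) 1, |1 / (1 - x) * h x| * (1 - x) ≤ C := by
    intro x hx
    calc |1 / (1 - x) * h x| * (1 - x) = |h x| * (|1 / (1 - x)| * (1 - x)) := by
          rw [abs_mul]; ring
      _ ≤ C * 1 := mul_le_mul (hhb x) (abs_one_div_mul hx)
          (mul_nonneg (abs_nonneg _) (by linarith [hx.2])) hC
      _ = C := mul_one C
  obtain ⟨swapB, intB⟩ := key_swap (Φ := fun x => 1 / (1 - x) * h x) (Ψ := g)
    (m1x.mul hhm) hgm measurableSet_Icc (subset_refl _) hgbI hPhi2b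
  have claimB : (∫ x in Icc (0:ℝ) 1, h x * (1 / (1 - x) * prim g x))
      = ∫ u in Icc (0:ℝ) 1, (∫ x in Icc (0:ℝ) u, 1 / (1 - x) * h x) * g u := by
    have lhs : (∫ x in Icc (0:ℝ) 1, h x * (1 / (1 - x) * prim g x))
        = ∫ x in Icc (0:ℝ) 1, (1 / (1 - x) * h x) * ∫ y in Icc x 1, g y :=
      setIntegral_congr_fun measurableSet_Icc fun x hx => by rw [← prim_Icc g hx.2]; ring
    rw [lhs, swapB]
    exact setIntegral_congr_fun measurableSet_Icc fun y hy => by simp only [hIic y hy]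
  have intB' : Integrable (fun u => (∫ x in Icc (0:ℝ) u, 1 / (1 - x) * h x) * g u)
      (volume.restrict (Icc (0:ℝ) 1)) :=
    intB.congr (Filter.eventually_of_mem (self_mem_ae_restrict measurableSet_Icc)
      fun y hy => by simp only [hIic y hy])
  -- Claim C : the integral of b3
  have hPhi3b : ∀ x ∈ Icc (0:ℝ) 1, |(1 / (1 - x))^2 * prim h x| * (1 - x) ≤ C := by
    intro x hx
    have e : (1 / (1 - x))^2 * prim h x = (1 / (1 - x) * prim h x) * (1 / (1 - x)) := by ring
    calc |(1 / (1 - x))^2 * prim h x| * (1 - x)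
        = |1 / (1 - x) * prim h x| * (|1 / (1 - x)| * (1 - x)) := by
          rw [e, abs_mul]; ring
      _ ≤ C * 1 := mul_le_mul (prim_ratio hC hhbI hx) (abs_one_div_mul hx)
          (mul_nonneg (abs_nonneg _) (by linarith [hx.2])) hC
      _ = C := mul_one C
  obtain ⟨swapC, _⟩ := key_swap (Φ := fun x => (1 / (1 - x))^2 * prim h x) (Ψ := g)
    ((m1x.pow_const 2).mul hHm) hgm measurableSet_Icc (subset_refl _) hgbI hPhi3b
  have claimC : (∫ x in Icc (0:ℝ) 1, (1 / (1 - x))^2 * (prim g x * prim h x))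
      = ∫ u in Icc (0:ℝ) 1, (∫ x in Icc (0:ℝ) u, (1 / (1 - x))^2 * prim h x) * g u := by
    have lhs : (∫ x in Icc (0:ℝ) 1, (1 / (1 - x))^2 * (prim g x * prim h x))
        = ∫ x in Icc (0:ℝ) 1, ((1 / (1 - x))^2 * prim h x) * ∫ y in Icc x 1, g y :=
      setIntegral_congr_fun measurableSet_Icc fun x hx => by rw [← prim_Icc g hx.2]; ring
    rw [lhs, swapC]
    exact setIntegral_congr_fun measurableSet_Icc fun y hy => by simp only [hIic y hy]
  -- Claim D : evaluation of the inner kernel for u < 1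
  have claimD : ∀ u ∈ Icc (0:ℝ) 1, u < 1 →
      (∫ x in Icc (0:ℝ) u, (1 / (1 - x))^2 * prim h x)
        = (∫ x in Icc (0:ℝ) u, 1 / (1 - x) * h x) + 1 / (1 - u) * prim h u := by
    intro u hu hu1
    have hpos : (0:ℝ) < 1 - u := by linarith
    have hsub : Icc (0:ℝ) u ⊆ Icc (0:ℝ) 1 := Set.Icc_subset_Icc_right hu.2
    have hPhi4b : ∀ x ∈ Icc (0:ℝ) u, |(1 / (1 - x))^2| * (1 - x) ≤ 1 / (1 - u) := by
      intro x hx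
      have hx1 : (0:ℝ) < 1 - x := by have := hx.2; linarith
      rw [abs_of_nonneg (sq_nonneg _)]
      have e : (1 / (1 - x))^2 * (1 - x) = 1 / (1 - x) := by
        field_simp
      rw [e]
      exact one_div_le_one_div_of_le hpos (by linarith [hx.2])
    obtain ⟨swapD, _⟩ := key_swap (Φ := fun x => (1 / (1 - x))^2) (Ψ := h)
      (m1x.pow_const 2) hhm measurableSet_Icc hsub hhbI hPhi4b
    have lhsD : (∫ x in Icc (0:ℝ) u, (1 / (1 - x))^2 * prim h x)
        = ∫ x in Icc (0:ℝ) u, (1 / (1 - x))^2 * ∫ y in Icc x 1, h y :=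
      setIntegral_congr_fun measurableSet_Icc fun x hx => by rw [prim_Icc h (hsub hx).2]
    have hmin : ∀ v : ℝ, Icc (0:ℝ) u ∩ Iic v = Icc 0 (min u v) := by
      intro v; ext z
      simp only [Set.mem_inter_iff, Set.mem_Icc, Set.mem_Iic, le_min_iff]
      tauto
    have step : (∫ x in Icc (0:ℝ) u, (1 / (1 - x))^2 * prim h x)
        = ∫ v in Icc (0:ℝ) 1, (1 / (1 - min u v) - 1) * h v := by
      rw [lhsD, swapD]
      refine setIntegral_congr_fun measurableSet_Icc fun v hv => ?_
      rw [hmin v, inv_sq_integral (le_min hu.1 hv.1) (lt_of_le_of_lt (min_le_left u v) hu1)]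
    have imin : IntegrableOn (fun v => 1 / (1 - min u v) * h v) (Icc (0:ℝ) 1) volume := by
      refine bdd_integrableOn
        ((m1x.comp (measurable_const.min measurable_id)).mul hhm).aestronglyMeasurable
        measurableSet_Icc (subset_refl _) (D := 1 / (1 - u) * C) fun v hv => ?_
      rw [abs_mul]
      refine mul_le_mul ?_ (hhb v) (abs_nonneg _) (by positivity)
      have hmv : min u v ≤ u := min_le_left _ _
      have hpos2 : (0:ℝ) < 1 - min u v := by linarith
      rw [abs_of_nonneg (by positivity : (0:ℝ) ≤ 1 / (1 - min u v))]
      exact one_div_le_one_div_of_le hpos (by linarith)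
    have split1 : (∫ v in Icc (0:ℝ) 1, (1 / (1 - min u v) - 1) * h v)
        = (∫ v in Icc (0:ℝ) 1, 1 / (1 - min u v) * h v) - ∫ v in Icc (0:ℝ) 1, h v := by
      rw [← integral_sub imin hhi.integrableOn]
      exact setIntegral_congr_fun measurableSet_Icc fun v _ => by ring
    have hdom : Icc (0:ℝ) 1 = Icc 0 u ∪ Ioc u 1 := (Icc_union_Ioc_eq_Icc hu.1 hu.2).symm
    have hdisj : Disjoint (Icc (0:ℝ) u) (Ioc u 1) :=
      (Iic_disjoint_Ioc le_rfl).mono Icc_subset_Iic_self le_rfl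
    have split2 : (∫ v in Icc (0:ℝ) 1, 1 / (1 - min u v) * h v)
        = (∫ v in Icc (0:ℝ) u, 1 / (1 - min u v) * h v)
          + ∫ v in Ioc u 1, 1 / (1 - min u v) * h v := by
      rw [hdom] at imin ⊢
      exact setIntegral_union hdisj measurableSet_Ioc (imin.mono_set subset_union_left)
        (imin.mono_set subset_union_right)
    have e1 : (∫ v in Icc (0:ℝ) u, 1 / (1 - min u v) * h v)
        = ∫ v in Icc (0:ℝ) u, 1 / (1 - v) * h v :=
      setIntegral_congr_fun measurableSet_Icc fun v hv => by rw [min_eq_right hv.2]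
    have e2 : (∫ v in Ioc u 1, 1 / (1 - min u v) * h v) = 1 / (1 - u) * prim h u := by
      have e2' : (∫ v in Ioc u 1, 1 / (1 - min u v) * h v)
          = ∫ v in Ioc u 1, 1 / (1 - u) * h v :=
        setIntegral_congr_fun measurableSet_Ioc fun v hv => by rw [min_eq_left hv.1.le]
      rw [e2', MeasureTheory.integral_const_mul, prim, intervalIntegral.integral_of_le hu.2]
    rw [step, split1, hh0, split2, e1, e2]
    ring
  -- almost everywhere `u ≠ 1`
  have h1ae : ∀ᵐ u : ℝ ∂volume, u ≠ 1 := by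
    have hv1 : volume ({1} : Set ℝ) = 0 := Real.volume_singleton
    rw [Filter.eventually_iff, mem_ae_iff]
    convert hv1 using 2
    ext u
    simp [not_not]
  have hfinal : (∫ u in Icc (0:ℝ) 1, (∫ x in Icc (0:ℝ) u, (1 / (1 - x))^2 * prim h x) * g u)
      = (∫ u in Icc (0:ℝ) 1, (∫ x in Icc (0:ℝ) u, 1 / (1 - x) * h x) * g u)
        + ∫ u in Icc (0:ℝ) 1, g u * (1 / (1 - u) * prim h u) := by
    have hcong : (∫ u in Icc (0:ℝ) 1, (∫ x in Icc (0:ℝ) u, (1 / (1 - x))^2 * prim h x) * g u)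
        = ∫ u in Icc (0:ℝ) 1, ((∫ x in Icc (0:ℝ) u, 1 / (1 - x) * h x) * g u
            + g u * (1 / (1 - u) * prim h u)) := by
      refine setIntegral_congr_ae measurableSet_Icc ?_
      filter_upwards [h1ae] with u hne hu
      rw [claimD u hu (lt_of_le_of_ne hu.2 hne)]
      ring
    rw [hcong]
    exact integral_add intB' i_b1
  have key3 : (∫ x in Icc (0:ℝ) 1, (1 / (1 - x))^2 * (prim g x * prim h x))
      = (∫ x in Icc (0:ℝ) 1, h x * (1 / (1 - x) * prim g x))
        + ∫ x in Icc (0:ℝ) 1, g x * (1 / (1 - x) * prim h x) := by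
    rw [claimC, hfinal, ← claimB]
  have decomp : (∫ x in Icc (0:ℝ) 1, hazardR g x * hazardR h x)
      = ∫ x in Icc (0:ℝ) 1, (g x * h x - g x * (1 / (1 - x) * prim h x)
          - h x * (1 / (1 - x) * prim g x) + (1 / (1 - x))^2 * (prim g x * prim h x)) :=
    setIntegral_congr_fun measurableSet_Icc fun x _ => hpt x
  have iA : Integrable (fun x => g x * h x - g x * (1 / (1 - x) * prim h x)
      - h x * (1 / (1 - x) * prim g x)) (volume.restrict (Icc (0:ℝ) 1)) :=
    (i_gh.sub i_b1).sub i_b2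
  have iB : Integrable (fun x => g x * h x - g x * (1 / (1 - x) * prim h x))
      (volume.restrict (Icc (0:ℝ) 1)) := i_gh.sub i_b1
  rw [decomp, integral_add iA i_b3, integral_sub iB i_b2, integral_sub i_gh i_b1]
  linarith [key3]

theorem sq_int (g : ℝ → ℝ) (hgm : Measurable g) (C : ℝ) (hC : 0 ≤ C)
    (hgb : ∀ y, |g y| ≤ C) (hgi : Integrable g) :
    IntegrableOn (fun x => (hazardR g x)^2) (Icc 0 1) volume := by
  have hGm : Measurable (prim g) := (prim_cont hgi).measurable
  have hm : Measurable fun x => (hazardR g x)^2 := by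
    have hm0 : Measurable (hazardR g) := by
      have e : hazardR g = fun x => g x - 1 / (1 - x) * prim g x := rfl
      rw [e]
      exact hgm.sub (m1x.mul hGm)
    exact hm0.pow_const 2
  refine bdd_integrableOn hm.aestronglyMeasurable measurableSet_Icc (subset_refl _)
    (D := (2 * C)^2) fun x hx => ?_
  have hb : |hazardR g x| ≤ 2 * C := by
    rw [hazardR_eq]
    calc |g x - 1 / (1 - x) * prim g x| ≤ |g x| + |1 / (1 - x) * prim g x| := abs_sub _ _
      _ ≤ C + C := add_le_add (hgb x) (prim_ratio hC (fun y _ => hgb y) hx)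
      _ = 2 * C := by ring
  rw [abs_of_nonneg (sq_nonneg _), ← sq_abs]
  exact pow_le_pow_left₀ (abs_nonneg _) hb 2

lemma indicator_bound {f : ℝ → ℝ} {C : ℝ} (hC : 0 ≤ C)
    (hfb : ∀ y ∈ Icc (0:ℝ) 1, |f y| ≤ C) :
    ∀ y, |(Icc (0:ℝ) 1).indicator f y| ≤ C := by
  intro y; by_cases hy : y ∈ Icc (0:ℝ) 1
  · rw [Set.indicator_of_mem hy]; exact hfb y hy
  · rw [Set.indicator_of_notMem hy]; simpa using hC

lemma indicator_integrable {f : ℝ → ℝ} (hfm : Measurable f) {C : ℝ}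
    (hfb : ∀ y ∈ Icc (0:ℝ) 1, |f y| ≤ C) :
    Integrable ((Icc (0:ℝ) 1).indicator f) := by
  rw [integrable_indicator_iff measurableSet_Icc]
  exact bdd_integrableOn hfm.aestronglyMeasurable.restrict measurableSet_Icc
    (subset_refl _) hfb

lemma hazardR_indicator (f : ℝ → ℝ) {x : ℝ} (hx : x ∈ Icc (0:ℝ) 1) :
    hazardR ((Icc (0:ℝ) 1).indicator f) x = hazardR f x := by
  simp only [hazardR]
  rw [Set.indicator_of_mem hx]
  congr 2
  rw [intervalIntegral.integral_of_le hx.2, intervalIntegral.integral_of_le hx.2]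
  exact setIntegral_congr_fun measurableSet_Ioc fun y hy =>
    Set.indicator_of_mem (show y ∈ Icc (0:ℝ) 1 from ⟨le_trans hx.1 hy.1.le, hy.2⟩) f

lemma indicator_int0 {f : ℝ → ℝ} (h0 : ∫ y in Icc (0:ℝ) 1, f y = 0) :
    ∫ y in Icc (0:ℝ) 1, (Icc (0:ℝ) 1).indicator f y = 0 := by
  rw [setIntegral_congr_fun measurableSet_Icc (fun y hy => Set.indicator_of_mem hy f)]
  exact h0

end HazardAux

/-- **R is an isometry.** Let `g, h : [0,1] → ℝ` be bounded measurable with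
`∫₀¹ g = ∫₀¹ h = 0`.  Then `R(g)` and `R(h)` are square integrable on `[0,1]` and
`∫₀¹ R(g) R(h) = ∫₀¹ g h`; in particular `∫₀¹ R(g)² = ∫₀¹ g²`. -/
theorem statement10
    (g h : ℝ → ℝ) (hgm : Measurable g) (hhm : Measurable h)
    (C : ℝ) (hgb : ∀ y ∈ Set.Icc (0:ℝ) 1, |g y| ≤ C) (hhb : ∀ y ∈ Set.Icc (0:ℝ) 1, |h y| ≤ C)
    (hg0 : ∫ y in Set.Icc (0:ℝ) 1, g y = 0)
    (hh0 : ∫ y in Set.Icc (0:ℝ) 1, h y = 0) :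
    IntegrableOn (fun x => (hazardR g x) ^ 2) (Set.Icc 0 1) volume ∧
    IntegrableOn (fun x => (hazardR h x) ^ 2) (Set.Icc 0 1) volume ∧
    (∫ x in Set.Icc (0:ℝ) 1, hazardR g x * hazardR h x = ∫ x in Set.Icc (0:ℝ) 1, g x * h x) ∧
    (∫ x in Set.Icc (0:ℝ) 1, (hazardR g x) ^ 2 = ∫ x in Set.Icc (0:ℝ) 1, (g x) ^ 2) := by
  have hC : 0 ≤ C := le_trans (abs_nonneg _) (hgb 0 (by norm_num))
  have hgm' : Measurable ((Icc (0:ℝ) 1).indicator g) := hgm.indicator measurableSet_Icc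
  have hhm' : Measurable ((Icc (0:ℝ) 1).indicator h) := hhm.indicator measurableSet_Icc
  have hgb' := HazardAux.indicator_bound hC hgb
  have hhb' := HazardAux.indicator_bound hC hhb
  have hgi' := HazardAux.indicator_integrable hgm hgb
  have hhi' := HazardAux.indicator_integrable hhm hhb
  have hg0' := HazardAux.indicator_int0 hg0
  have hh0' := HazardAux.indicator_int0 hh0
  refine ⟨?_, ?_, ?_, ?_⟩
  · exact (HazardAux.sq_int _ hgm' C hC hgb' hgi').congr_fun
      (fun x hx => by dsimp only; rw [HazardAux.hazardR_indicator g hx]) measurableSet_Icc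
  · exact (HazardAux.sq_int _ hhm' C hC hhb' hhi').congr_fun
      (fun x hx => by dsimp only; rw [HazardAux.hazardR_indicator h hx]) measurableSet_Icc
  · calc ∫ x in Icc (0:ℝ) 1, hazardR g x * hazardR h x
        = ∫ x in Icc (0:ℝ) 1, hazardR ((Icc (0:ℝ) 1).indicator g) x
            * hazardR ((Icc (0:ℝ) 1).indicator h) x :=
          setIntegral_congr_fun measurableSet_Icc fun x hx => by
            rw [HazardAux.hazardR_indicator g hx, HazardAux.hazardR_indicator h hx]
      _ = ∫ x in Icc (0:ℝ) 1, (Icc (0:ℝ) 1).indicator g x * (Icc (0:ℝ) 1).indicator h x :=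
          HazardAux.master _ _ hgm' hhm' C hC hgb' hhb' hgi' hhi' hg0' hh0'
      _ = ∫ x in Icc (0:ℝ) 1, g x * h x :=
          setIntegral_congr_fun measurableSet_Icc fun x hx => by
            rw [Set.indicator_of_mem hx, Set.indicator_of_mem hx]
  · calc ∫ x in Icc (0:ℝ) 1, (hazardR g x) ^ 2
        = ∫ x in Icc (0:ℝ) 1, hazardR ((Icc (0:ℝ) 1).indicator g) x
            * hazardR ((Icc (0:ℝ) 1).indicator g) x :=
          setIntegral_congr_fun measurableSet_Icc fun x hx => by
            rw [HazardAux.hazardR_indicator g hx]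
            exact pow_two _
      _ = ∫ x in Icc (0:ℝ) 1, (Icc (0:ℝ) 1).indicator g x * (Icc (0:ℝ) 1).indicator g x :=
          HazardAux.master _ _ hgm' hgm' C hC hgb' hgb' hgi' hgi' hg0' hg0'
      _ = ∫ x in Icc (0:ℝ) 1, (g x) ^ 2 :=
          setIntegral_congr_fun measurableSet_Icc fun x hx => by
            rw [Set.indicator_of_mem hx]
            exact (pow_two _).symm
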